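/- A weakly decreasing nonnegative integer sequence d of length n is the degree partition of an r-uniform hypergraph on [n] if and only if d is majorized by the degree sequence of some r-ideal (an r-graph whose edge set is an order ideal of S(n,r)). -/

import Mathlib

/-- The degree of vertex `v` in the hypergraph on `[n]` with edge set `E`. -/
def rdeg {n : ℕ} (E : Finset (Finset (Fin n))) (v : Fin n) : ℕ :=
  (E.filter (fun e => v ∈ e)).card

/-- `d` is the degree sequence of an `r`-uniform hypergraph on `[n]`. -/
def IsRDegSeq (n r : ℕ) (d : Fin n → ℕ) : Prop :=
  ∃ E : Finset (Finset (Fin n)), (∀ e ∈ E, e.card = r) ∧ ∀ v, d v = rdeg E v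

/-- The componentwise order on same-size subsets of `[n]` (each written in
increasing order): `X ≤ Y` iff for every threshold `t`, `Y` has at least as many
elements `≥ t` as `X` does; for `#X = #Y` this says the `k`-th smallest element
of `X` is at most the `k`-th smallest element of `Y`, for every `k`. -/
def SetLE {n : ℕ} (X Y : Finset (Fin n)) : Prop :=
  ∀ t : Fin n, (X.filter (fun x => t ≤ x)).card ≤ (Y.filter (fun y => t ≤ y)).card

/-- `E` is an `r`-ideal: an `r`-uniform edge set which is an order ideal of
`S(n,r)` under the componentwise order. -/
def IsRIdeal (n r : ℕ) (E : Finset (Finset (Fin n))) : Prop :=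
  (∀ e ∈ E, e.card = r) ∧
  ∀ X Y : Finset (Fin n), Y ∈ E → X.card = r → SetLE X Y → X ∈ E

/-- The sum of the first `k` entries of `a`. -/
def psum {n : ℕ} (a : Fin n → ℕ) (k : ℕ) : ℕ :=
  ∑ i ∈ Finset.univ.filter (fun i : Fin n => (i : ℕ) < k), a i

/-- `a` majorizes `b`: after sorting both weakly decreasingly, every partial sum
of `a` dominates the corresponding partial sum of `b`, with equal total sums. -/
def Majorizes {n : ℕ} (a b : Fin n → ℕ) : Prop :=
  ∃ σ τ : Equiv.Perm (Fin n), Antitone (a ∘ σ) ∧ Antitone (b ∘ τ) ∧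
    (∀ k, k ≤ n → psum (b ∘ τ) k ≤ psum (a ∘ σ) k) ∧
    psum (a ∘ σ) n = psum (b ∘ τ) n

section Aux
open Finset

def topSum {n : ℕ} (a : Fin n → ℕ) (k : ℕ) : ℕ :=
  ((Finset.univ : Finset (Finset (Fin n))).filter (fun S => S.card ≤ k)).sup
    (fun S => ∑ i ∈ S, a i)

lemma le_topSum {n : ℕ} (a : Fin n → ℕ) {k : ℕ} {S : Finset (Fin n)} (h : S.card ≤ k) :
    ∑ i ∈ S, a i ≤ topSum a k := by
  unfold topSum
  exact Finset.le_sup (f := fun S => ∑ i ∈ S, a i) (by simp [h])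

lemma topSum_le {n : ℕ} {a : Fin n → ℕ} {k m : ℕ}
    (h : ∀ S : Finset (Fin n), S.card ≤ k → ∑ i ∈ S, a i ≤ m) : topSum a k ≤ m := by
  apply Finset.sup_le; intro S hS; exact h S (by simpa using hS)

lemma psum_n {n : ℕ} (a : Fin n → ℕ) : psum a n = ∑ i, a i := by
  unfold psum; congr 1; ext i; simp [i.isLt]

lemma psum_of_le {n : ℕ} (a : Fin n → ℕ) {k : ℕ} (h : n ≤ k) : psum a k = ∑ i, a i := by
  unfold psum; congr 1; ext i; simp [lt_of_lt_of_le i.isLt h]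

lemma filter_lt_insert {n : ℕ} {k : ℕ} (hk : k < n) :
    (Finset.univ.filter (fun i : Fin n => (i : ℕ) < k + 1)) =
      insert ⟨k, hk⟩ (Finset.univ.filter (fun i : Fin n => (i : ℕ) < k)) := by
  ext i
  simp only [mem_insert, mem_filter, mem_univ, true_and]
  constructor
  · intro h
    rcases Nat.lt_succ_iff_lt_or_eq.mp h with h | h
    · exact Or.inr h
    · exact Or.inl (Fin.ext h)
  · rintro (rfl | h)
    · simp
    · omega

lemma psum_succ {n : ℕ} (a : Fin n → ℕ) {k : ℕ} (hk : k < n) :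
    psum a (k + 1) = psum a k + a ⟨k, hk⟩ := by
  unfold psum
  rw [filter_lt_insert hk, Finset.sum_insert (by simp), add_comm]

lemma card_filter_lt {n k : ℕ} :
    (Finset.univ.filter (fun i : Fin n => (i : ℕ) < k)).card ≤ k := by
  have : (Finset.univ.filter (fun i : Fin n => (i : ℕ) < k)).card
      ≤ (Finset.range k).card := by
    exact Finset.card_le_card_of_injOn (fun i => (i : ℕ))
      (by intro i hi; simp at hi ⊢; exact hi)
      (by intro i _ j _ h; exact Fin.ext h)
  simpa using this

/-- move an element of S that is ≥ k to a free slot < k, not decreasing the sum of an antitone fn -/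
lemma sum_le_psum_of_antitone {n : ℕ} {a : Fin n → ℕ} (ha : Antitone a) (k : ℕ)
    (S : Finset (Fin n)) (hS : S.card ≤ k) : ∑ i ∈ S, a i ≤ psum a k := by
  by_cases hkn : n ≤ k
  · rw [psum_of_le a hkn]
    exact Finset.sum_le_sum_of_subset (Finset.subset_univ S)
  push_neg at hkn
  -- strong induction on ∑ i ∈ S, (i:ℕ)
  generalize hM : (∑ i ∈ S, (i : ℕ)) = M
  induction M using Nat.strong_induction_on generalizing S with
  | _ M IH =>
  subst hM
  set F := Finset.univ.filter (fun i : Fin n => (i : ℕ) < k) with hF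
  by_cases hsub : S ⊆ F
  · exact Finset.sum_le_sum_of_subset hsub
  · -- there is i ∈ S with i ∉ F, i.e. (i:ℕ) ≥ k
    obtain ⟨i, hiS, hiF⟩ := Finset.not_subset.mp hsub
    have hik : k ≤ (i : ℕ) := by simp [hF] at hiF; exact hiF
    -- there is m ∈ F with m ∉ S
    have hFcard : F.card = k := by
      rw [hF]
      have : (Finset.univ.filter (fun i : Fin n => (i : ℕ) < k)).card
          = (Finset.range k).card := by
        exact Finset.card_nbij (fun i => (i : ℕ))
          (by intro i hi; simp at hi ⊢; exact hi)
          (by intro i _ j _ h; exact Fin.ext h)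
          (by intro m hm
              simp at hm
              exact ⟨⟨m, lt_trans hm hkn⟩, by simp [hm]⟩)
      simpa using this
    have : ¬ (F ⊆ S) := by
      intro hFS
      have h1 : F.card ≤ (S.erase i).card := by
        apply Finset.card_le_card
        intro x hx
        have hxk : (x : ℕ) < k := by
          have := hx; rw [hF] at this; simpa using this
        refine Finset.mem_erase.mpr ⟨?_, hFS hx⟩
        rintro rfl
        omega
      have h2 : (S.erase i).card = S.card - 1 := Finset.card_erase_of_mem hiS
      have h3 : 1 ≤ S.card := Finset.card_pos.mpr ⟨i, hiS⟩
      omega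
    obtain ⟨m, hmF, hmS⟩ := Finset.not_subset.mp this
    have hmk : (m : ℕ) < k := by simp [hF] at hmF; exact hmF
    have hmi : m ≤ i := by
      apply Fin.le_def.mpr; omega
    set S' := insert m (S.erase i) with hS'
    have hcard : S'.card ≤ k := by
      rw [hS', Finset.card_insert_of_notMem (by simp [hmS]),
        Finset.card_erase_of_mem hiS]
      omega
    have hsum : ∑ x ∈ S, a x ≤ ∑ x ∈ S', a x := by
      rw [hS', Finset.sum_insert (by simp [hmS]),
        ← Finset.sum_erase_add S a hiS, add_comm]
      exact Nat.add_le_add_right (ha hmi) _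
    have hmeas : ∑ x ∈ S', (x : ℕ) < ∑ x ∈ S, (x : ℕ) := by
      rw [hS', Finset.sum_insert (by simp [hmS]),
        ← Finset.sum_erase_add S (fun x => (x : ℕ)) hiS, add_comm]
      omega
    exact le_trans hsum (IH _ hmeas S' hcard rfl)

lemma psum_antitone_eq_topSum {n : ℕ} {a : Fin n → ℕ} (ha : Antitone a) (k : ℕ) :
    psum a k = topSum a k := by
  apply le_antisymm
  · exact le_topSum a card_filter_lt
  · exact topSum_le (fun S hS => sum_le_psum_of_antitone ha k S hS)

lemma topSum_comp_perm {n : ℕ} (a : Fin n → ℕ) (σ : Equiv.Perm (Fin n)) (k : ℕ) :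
    topSum (a ∘ σ) k = topSum a k := by
  have h : ∀ (b : Fin n → ℕ) (π : Equiv.Perm (Fin n)) (k : ℕ),
      topSum (b ∘ π) k ≤ topSum b k := by
    intro b π k
    apply topSum_le
    intro S hS
    have h2 : ∑ i ∈ S, (b ∘ π) i = ∑ i ∈ S.image π, b i :=
      (Finset.sum_image (fun x _ y _ h => π.injective h)).symm
    exact le_of_eq h2 |>.trans (le_topSum b (le_trans (Finset.card_image_le) hS))
  apply le_antisymm (h a σ k)
  have := h (a ∘ σ) σ⁻¹ k
  simpa [Function.comp_def] using this

/-- every function has an antitone rearrangement -/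
lemma exists_sort_perm {n : ℕ} (a : Fin n → ℕ) : ∃ σ : Equiv.Perm (Fin n), Antitone (a ∘ σ) := by
  refine ⟨(Fin.revPerm).trans (Tuple.sort a), ?_⟩
  have h := Tuple.monotone_sort a
  intro x y hxy
  exact h (Fin.rev_le_rev.mpr hxy)


lemma majorizes_of_topSum {n : ℕ} {a b : Fin n → ℕ}
    (h : ∀ k, topSum b k ≤ topSum a k) (hsum : ∑ i, a i = ∑ i, b i) : Majorizes a b := by
  obtain ⟨σ, hσ⟩ := exists_sort_perm a
  obtain ⟨τ, hτ⟩ := exists_sort_perm b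
  refine ⟨σ, τ, hσ, hτ, ?_, ?_⟩
  · intro k _
    rw [psum_antitone_eq_topSum hσ, psum_antitone_eq_topSum hτ,
        topSum_comp_perm, topSum_comp_perm]
    exact h k
  · rw [psum_n, psum_n]
    calc ∑ i, (a ∘ σ) i = ∑ i, a i := Equiv.sum_comp σ a
      _ = ∑ i, b i := hsum
      _ = ∑ i, (b ∘ τ) i := (Equiv.sum_comp τ b).symm

lemma rdeg_relabel {n : ℕ} (E : Finset (Finset (Fin n))) (π : Equiv.Perm (Fin n)) (v : Fin n) :
    rdeg (E.image (fun e => e.image π)) v = rdeg E (π⁻¹ v) := by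
  unfold rdeg
  rw [Finset.filter_image, Finset.card_image_of_injOn
    (Set.injOn_of_injective (Finset.image_injective π.injective))]
  congr 1
  apply Finset.filter_congr
  intro e _
  simp only [Finset.mem_image]
  constructor
  · rintro ⟨x, hx, rfl⟩
    simpa using hx
  · intro hx
    exact ⟨π⁻¹ v, hx, by simp⟩

lemma relabel_uniform {n r : ℕ} {E : Finset (Finset (Fin n))} (hU : ∀ e ∈ E, e.card = r)
    (π : Equiv.Perm (Fin n)) : ∀ e ∈ E.image (fun e => e.image π), e.card = r := by
  intro e he
  obtain ⟨f, hf, rfl⟩ := Finset.mem_image.mp he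
  rw [Finset.card_image_of_injective _ π.injective]
  exact hU f hf

lemma sum_rdeg {n : ℕ} (E : Finset (Finset (Fin n))) : ∑ v, rdeg E v = ∑ e ∈ E, e.card := by
  unfold rdeg
  simp_rw [Finset.card_filter]
  rw [Finset.sum_comm]
  apply Finset.sum_congr rfl
  intro e _
  rw [Finset.sum_ite_mem, Finset.univ_inter, Finset.card_eq_sum_ones]

lemma rdeg_split {n : ℕ} (E : Finset (Finset (Fin n))) (u v : Fin n) :
    (E.filter (fun e => u ∈ e ∧ v ∈ e)).card
      + (E.filter (fun e => u ∈ e ∧ v ∉ e)).card = rdeg E u := by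
  unfold rdeg
  rw [← Finset.filter_filter, ← Finset.filter_filter]
  exact Finset.card_filter_add_card_filter_not _

lemma transfer_realizable {n r : ℕ} {E : Finset (Finset (Fin n))}
    (hU : ∀ e ∈ E, e.card = r) {u v : Fin n} (huv : rdeg E v < rdeg E u) :
    ∃ E' : Finset (Finset (Fin n)), (∀ e ∈ E', e.card = r) ∧
      rdeg E' u = rdeg E u - 1 ∧ rdeg E' v = rdeg E v + 1 ∧
      ∀ w, w ≠ u → w ≠ v → rdeg E' w = rdeg E w := by
  classical
  have huvne : u ≠ v := by rintro rfl; exact lt_irrefl _ huv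
  have h1 := rdeg_split E u v
  have h2 := rdeg_split E v u
  have hboth : (E.filter (fun e => v ∈ e ∧ u ∈ e)).card
      = (E.filter (fun e => u ∈ e ∧ v ∈ e)).card := by
    congr 1
    exact Finset.filter_congr (fun e _ => and_comm)
  set S := E.filter (fun e => u ∈ e ∧ v ∉ e) with hSdef
  set T := E.filter (fun e => v ∈ e ∧ u ∉ e) with hTdef
  have hST : T.card < S.card := by
    rw [hboth] at h2; omega
  -- find e ∈ S with swap not in E
  have hex : ∃ e ∈ S, insert v (e.erase u) ∉ E := by
    by_contra hcon
    push_neg at hcon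
    have himg : S.image (fun e => insert v (e.erase u)) ⊆ T := by
      intro f hf
      obtain ⟨e, he, rfl⟩ := Finset.mem_image.mp hf
      have he' := Finset.mem_filter.mp he
      refine Finset.mem_filter.mpr ⟨hcon e he, ?_, ?_⟩
      · exact Finset.mem_insert_self _ _
      · simp only [Finset.mem_insert]
        push_neg
        exact ⟨huvne, Finset.notMem_erase u e⟩
    have hinj : Set.InjOn (fun e : Finset (Fin n) => insert v (e.erase u)) (↑S : Set (Finset (Fin n))) := by
      intro e1 he1 e2 he2 heq
      rw [Finset.mem_coe] at he1 he2
      simp only at heq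
      have h1' := Finset.mem_filter.mp he1
      have h2' := Finset.mem_filter.mp he2
      have hv1 : v ∉ e1.erase u := fun h => h1'.2.2 (Finset.mem_of_mem_erase h)
      have hv2 : v ∉ e2.erase u := fun h => h2'.2.2 (Finset.mem_of_mem_erase h)
      have : e1.erase u = e2.erase u := by
        have := congrArg (fun s => Finset.erase s v) heq
        simpa [Finset.erase_insert hv1, Finset.erase_insert hv2] using this
      have e1eq : e1 = insert u (e1.erase u) := (Finset.insert_erase h1'.2.1).symm
      have e2eq : e2 = insert u (e2.erase u) := (Finset.insert_erase h2'.2.1).symm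
      rw [e1eq, e2eq, this]
    have := Finset.card_le_card himg
    rw [Finset.card_image_of_injOn hinj] at this
    omega
  obtain ⟨e, heS, hnot⟩ := hex
  have heE : e ∈ E := (Finset.mem_filter.mp heS).1
  have heu : u ∈ e := (Finset.mem_filter.mp heS).2.1
  have hev : v ∉ e := (Finset.mem_filter.mp heS).2.2
  set f := insert v (e.erase u) with hfdef
  have hvf : v ∈ f := Finset.mem_insert_self _ _
  have huf : u ∉ f := by
    simp only [hfdef, Finset.mem_insert]
    push_neg
    exact ⟨huvne, Finset.notMem_erase u e⟩
  have hcardf : f.card = e.card := by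
    rw [hfdef, Finset.card_insert_of_notMem
      (fun h => hev (Finset.mem_of_mem_erase h)), Finset.card_erase_of_mem heu]
    have : 1 ≤ e.card := Finset.card_pos.mpr ⟨u, heu⟩
    omega
  refine ⟨insert f (E.erase e), ?_, ?_, ?_, ?_⟩
  · intro g hg
    rcases Finset.mem_insert.mp hg with rfl | hg
    · rw [hcardf]; exact hU e heE
    · exact hU g (Finset.mem_of_mem_erase hg)
  · unfold rdeg
    rw [Finset.filter_insert, if_neg huf, Finset.filter_erase,
      Finset.card_erase_of_mem (Finset.mem_filter.mpr ⟨heE, heu⟩)]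
  · unfold rdeg
    rw [Finset.filter_insert, if_pos hvf, Finset.filter_erase]
    have h3 : (Finset.filter (fun e => v ∈ e) E).erase e
        = Finset.filter (fun e => v ∈ e) E := by
      apply Finset.erase_eq_of_notMem
      intro h
      exact hev (Finset.mem_filter.mp h).2
    rw [h3, Finset.card_insert_of_notMem]
    intro h
    exact hnot (Finset.mem_filter.mp h).1
  · intro w hwu hwv
    unfold rdeg
    rw [Finset.filter_insert, Finset.filter_erase]
    have hwf : w ∈ f ↔ w ∈ e := by
      simp only [hfdef, Finset.mem_insert, Finset.mem_erase]
      constructor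
      · rintro (rfl | ⟨_, h⟩)
        · exact absurd rfl hwv
        · exact h
      · intro h; exact Or.inr ⟨hwu, h⟩
    by_cases hwe : w ∈ e
    · rw [if_pos (hwf.mpr hwe),
        Finset.card_insert_of_notMem (fun h => hnot (Finset.mem_of_mem_erase (by exact h) |> (Finset.mem_filter.mp · |>.1) )),
        Finset.card_erase_of_mem (Finset.mem_filter.mpr ⟨heE, hwe⟩)]
      have : 1 ≤ (Finset.filter (fun e => w ∈ e) E).card :=
        Finset.card_pos.mpr ⟨e, Finset.mem_filter.mpr ⟨heE, hwe⟩⟩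
      omega
    · rw [if_neg (fun h => hwe (hwf.mp h)), Finset.erase_eq_of_notMem]
      intro h
      exact hwe (Finset.mem_filter.mp h).2

set_option maxHeartbeats 1000000 in
lemma chain_realize {n r : ℕ} : ∀ N : ℕ, ∀ a b : Fin n → ℕ,
    Antitone a → Antitone b →
    (∀ k, psum b k ≤ psum a k) → psum a n = psum b n →
    (∑ k ∈ Finset.range (n+1), (psum a k - psum b k)) ≤ N →
    (∃ E : Finset (Finset (Fin n)), (∀ e ∈ E, e.card = r) ∧ ∀ w, rdeg E w = a w) →
    ∃ E : Finset (Finset (Fin n)), (∀ e ∈ E, e.card = r) ∧ ∀ w, rdeg E w = b w := by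
  intro N
  induction N with
  | zero =>
    intro a b ha hb hle htot hmeas hwit
    -- all partial sums are equal, so a = b
    have hps : ∀ k, k ≤ n → psum a k = psum b k := by
      intro k hk
      have : psum a k - psum b k = 0 := by
        have := Finset.sum_eq_zero_iff.mp (Nat.le_zero.mp hmeas) k
          (Finset.mem_range.mpr (Nat.lt_succ_of_le hk))
        exact this
      have := hle k
      omega
    have hab : ∀ w : Fin n, a w = b w := by
      intro w
      have h1 := psum_succ a w.isLt
      have h2 := psum_succ b w.isLt
      have e1 := hps w.1 (le_of_lt w.isLt)
      have e2 := hps (w.1 + 1) w.isLt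
      simp only [Fin.eta] at h1 h2
      omega
    obtain ⟨E, hE1, hE2⟩ := hwit
    exact ⟨E, hE1, fun w => (hE2 w).trans (hab w)⟩
  | succ N IH =>
    intro a b ha hb hle htot hmeas hwit
    by_cases habeq : ∀ w : Fin n, a w = b w
    · obtain ⟨E, hE1, hE2⟩ := hwit
      exact ⟨E, hE1, fun w => (hE2 w).trans (habeq w)⟩
    push_neg at habeq
    classical
    -- least index where a ≠ b
    have hI : ∃ i0 : Fin n, a i0 ≠ b i0 ∧ ∀ m : Fin n, m < i0 → a m = b m := by
      have hDne : (Finset.univ.filter (fun i : Fin n => a i ≠ b i)).Nonempty := by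
        obtain ⟨w, hw⟩ := habeq
        exact ⟨w, Finset.mem_filter.mpr ⟨Finset.mem_univ w, hw⟩⟩
      refine ⟨(Finset.univ.filter (fun i : Fin n => a i ≠ b i)).min' hDne,
        (Finset.mem_filter.mp (Finset.min'_mem _ hDne)).2, ?_⟩
      intro m hm
      by_contra hcon
      exact absurd hm (not_lt.mpr (Finset.min'_le _ m
        (Finset.mem_filter.mpr ⟨Finset.mem_univ m, hcon⟩)))
    obtain ⟨i0, hi0ne, hi0min⟩ := hI
    have hpse : psum a i0 = psum b i0 := by
      apply Finset.sum_congr rfl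
      intro m hm
      exact hi0min m (by
        have := (Finset.mem_filter.mp hm).2
        exact Fin.lt_def.mpr this)
    have hi0gt : b i0 < a i0 := by
      have h1 := psum_succ a i0.isLt
      have h2 := psum_succ b i0.isLt
      have h3 := hle (i0.1 + 1)
      simp only [Fin.eta] at h1 h2
      rcases lt_or_ge (b i0) (a i0) with h | h
      · exact h
      · exfalso; apply hi0ne; omega
    -- least index where a < b
    have hJ : ∃ j0 : Fin n, a j0 < b j0 ∧ ∀ m : Fin n, m < j0 → b m ≤ a m := by
      have hJne : (Finset.univ.filter (fun j : Fin n => a j < b j)).Nonempty := by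
        by_contra hcon
        rw [Finset.not_nonempty_iff_eq_empty, Finset.filter_eq_empty_iff] at hcon
        have hless : ∑ i, b i < ∑ i, a i := by
          apply Finset.sum_lt_sum
          · intro i _; exact not_lt.mp (hcon (Finset.mem_univ i))
          · exact ⟨i0, Finset.mem_univ i0, hi0gt⟩
        rw [psum_n, psum_n] at htot
        omega
      obtain ⟨j0, hj0mem, hj0le⟩ := Finset.exists_min_image
        (Finset.univ.filter (fun j : Fin n => a j < b j)) id hJne
      refine ⟨j0, (Finset.mem_filter.mp hj0mem).2, ?_⟩
      intro m hm
      by_contra hcon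
      have := hj0le m (Finset.mem_filter.mpr ⟨Finset.mem_univ m, not_le.mp hcon⟩)
      simp only [id] at this
      exact absurd hm (not_lt.mpr this)
    obtain ⟨j0, hj0lt, hj0min⟩ := hJ
    have hij : i0 < j0 := by
      rcases lt_trichotomy i0 j0 with h | h | h
      · exact h
      · exfalso; rw [h] at hi0gt; omega
      · exfalso; have := hi0min j0 h; omega
    -- the positions to move
    have hUex : ∃ u : Fin n, a u = a i0 ∧ i0 ≤ u ∧ ∀ k : Fin n, u < k → a k < a u := by
      have humem : i0 ∈ Finset.univ.filter (fun k : Fin n => a k = a i0) :=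
        Finset.mem_filter.mpr ⟨Finset.mem_univ _, rfl⟩
      set u := (Finset.univ.filter (fun k : Fin n => a k = a i0)).max' ⟨i0, humem⟩ with hudef
      have hua : a u = a i0 := (Finset.mem_filter.mp (Finset.max'_mem
        (Finset.univ.filter (fun k : Fin n => a k = a i0)) ⟨i0, humem⟩)).2
      refine ⟨u, hua, Finset.le_max' _ i0 humem, ?_⟩
      intro k hk
      have h1 : a k ≤ a u := ha (le_of_lt hk)
      rcases lt_or_eq_of_le h1 with h | h
      · exact h
      · exfalso
        have : k ≤ u := Finset.le_max' _ k (Finset.mem_filter.mpr ⟨Finset.mem_univ _, h.trans hua⟩)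
        exact absurd hk (not_lt.mpr this)
    obtain ⟨u, hua, hiu, hmaxu⟩ := hUex
    have hVex : ∃ v : Fin n, a v = a j0 ∧ v ≤ j0 ∧ ∀ k : Fin n, k < v → a v < a k := by
      have hvmem : j0 ∈ Finset.univ.filter (fun k : Fin n => a k = a j0) :=
        Finset.mem_filter.mpr ⟨Finset.mem_univ _, rfl⟩
      set v := (Finset.univ.filter (fun k : Fin n => a k = a j0)).min' ⟨j0, hvmem⟩ with hvdef
      have hva : a v = a j0 := (Finset.mem_filter.mp (Finset.min'_mem
        (Finset.univ.filter (fun k : Fin n => a k = a j0)) ⟨j0, hvmem⟩)).2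
      refine ⟨v, hva, Finset.min'_le _ j0 hvmem, ?_⟩
      intro k hk
      have h1 : a v ≤ a k := ha (le_of_lt hk)
      rcases lt_or_eq_of_le h1 with h | h
      · exact h
      · exfalso
        have : v ≤ k := Finset.min'_le _ k (Finset.mem_filter.mpr ⟨Finset.mem_univ _, (h.symm.trans hva)⟩)
        exact absurd hk (not_lt.mpr this)
    obtain ⟨v, hva, hvj, hminv⟩ := hVex
    have hgap : a v + 2 ≤ a u := by
      have hb0 : b j0 ≤ b i0 := hb (le_of_lt hij)
      omega
    have huv : u < v := by
      rcases lt_or_ge u v with h | h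
      · exact h
      · exfalso
        have := ha h
        omega
    have hune : u ≠ v := ne_of_lt huv
    set a' := Function.update (Function.update a u (a u - 1)) v (a v + 1) with ha'def
    have ha'u : a' u = a u - 1 := by
      rw [ha'def, Function.update_of_ne hune, Function.update_self]
    have ha'v : a' v = a v + 1 := by
      rw [ha'def, Function.update_self]
    have ha'w : ∀ w : Fin n, w ≠ u → w ≠ v → a' w = a w := by
      intro w hwu hwv
      rw [ha'def, Function.update_of_ne hwv, Function.update_of_ne hwu]
    -- a' is antitone
    have ha' : Antitone a' := by
      intro p q hpq
      rcases eq_or_lt_of_le hpq with rfl | hlt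
      · exact le_refl _
      by_cases hqu : q = u
      · have hpu : p ≠ u := by rw [← hqu]; exact ne_of_lt hlt
        have hpv : p ≠ v := by
          intro h
          rw [h, hqu] at hlt
          exact absurd hlt (not_lt.mpr (le_of_lt huv))
        have h2 : a q ≤ a p := ha (le_of_lt hlt)
        rw [hqu, ha'u, ha'w p hpu hpv]
        rw [hqu] at h2
        omega
      by_cases hqv : q = v
      · rw [hqv, ha'v]
        by_cases hpu : p = u
        · rw [hpu, ha'u]; omega
        · have hpv : p ≠ v := by rw [← hqv]; exact ne_of_lt hlt
          rw [ha'w p hpu hpv]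
          have h2 : p < v := by rw [← hqv]; exact hlt
          have := hminv p h2
          omega
      · rw [ha'w q hqu hqv]
        by_cases hpu : p = u
        · have h2 : u < q := by rw [← hpu]; exact hlt
          rw [hpu, ha'u]
          have := hmaxu q h2
          omega
        by_cases hpv : p = v
        · rw [hpv, ha'v]
          have h2 : a q ≤ a p := ha (le_of_lt hlt)
          rw [hpv] at h2
          omega
        · rw [ha'w p hpu hpv]
          exact ha (le_of_lt hlt)
    -- partial sums of a'
    have hps1 : ∀ k, k ≤ (u : ℕ) → psum a' k = psum a k := by
      intro k hk
      apply Finset.sum_congr rfl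
      intro m hm
      have hmk : (m : ℕ) < k := (Finset.mem_filter.mp hm).2
      have hmu : m ≠ u := fun h => by subst h; omega
      have hmv : m ≠ v := fun h => by
        subst h
        have : (u:ℕ) < (m:ℕ) := huv
        omega
      exact ha'w m hmu hmv
    have hps2 : ∀ k, (u : ℕ) < k → k ≤ (v : ℕ) → psum a' k + 1 = psum a k := by
      intro k hku hkv
      have humem' : u ∈ Finset.univ.filter (fun i : Fin n => (i : ℕ) < k) :=
        Finset.mem_filter.mpr ⟨Finset.mem_univ _, hku⟩
      rw [psum, psum, ← Finset.sum_erase_add _ _ humem', ← Finset.sum_erase_add _ _ humem']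
      have hcong : ∑ m ∈ (Finset.univ.filter (fun i : Fin n => (i : ℕ) < k)).erase u, a' m
          = ∑ m ∈ (Finset.univ.filter (fun i : Fin n => (i : ℕ) < k)).erase u, a m := by
        apply Finset.sum_congr rfl
        intro m hm
        have hmu : m ≠ u := (Finset.mem_erase.mp hm).1
        have hmk : (m : ℕ) < k := (Finset.mem_filter.mp (Finset.mem_erase.mp hm).2).2
        have hmv : m ≠ v := fun h => by subst h; omega
        exact ha'w m hmu hmv
      rw [hcong, ha'u]
      omega
    have hps3 : ∀ k, (v : ℕ) < k → psum a' k = psum a k := by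
      intro k hkv
      have hku : (u : ℕ) < k := lt_trans huv hkv
      have humem' : u ∈ Finset.univ.filter (fun i : Fin n => (i : ℕ) < k) :=
        Finset.mem_filter.mpr ⟨Finset.mem_univ _, hku⟩
      have hvmem' : v ∈ (Finset.univ.filter (fun i : Fin n => (i : ℕ) < k)).erase u :=
        Finset.mem_erase.mpr ⟨(ne_of_lt huv).symm, Finset.mem_filter.mpr ⟨Finset.mem_univ _, hkv⟩⟩
      rw [psum, psum, ← Finset.sum_erase_add _ _ humem', ← Finset.sum_erase_add _ _ humem',
        ← Finset.sum_erase_add _ _ hvmem', ← Finset.sum_erase_add _ _ hvmem']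
      have hcong : ∑ m ∈ ((Finset.univ.filter (fun i : Fin n => (i : ℕ) < k)).erase u).erase v, a' m
          = ∑ m ∈ ((Finset.univ.filter (fun i : Fin n => (i : ℕ) < k)).erase u).erase v, a m := by
        apply Finset.sum_congr rfl
        intro m hm
        have hmv : m ≠ v := (Finset.mem_erase.mp hm).1
        have hmu : m ≠ u := (Finset.mem_erase.mp (Finset.mem_erase.mp hm).2).1
        exact ha'w m hmu hmv
      rw [hcong, ha'u, ha'v]
      omega
    -- strict partial sum inequality in the middle range
    have hstrict : ∀ k, (i0 : ℕ) < k → k ≤ (j0 : ℕ) → psum b k + 1 ≤ psum a k := by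
      intro k hki hkj
      have hi0mem' : i0 ∈ Finset.univ.filter (fun i : Fin n => (i : ℕ) < k) :=
        Finset.mem_filter.mpr ⟨Finset.mem_univ _, hki⟩
      rw [psum, psum, ← Finset.sum_erase_add _ _ hi0mem', ← Finset.sum_erase_add _ _ hi0mem']
      have hcong : ∑ m ∈ (Finset.univ.filter (fun i : Fin n => (i : ℕ) < k)).erase i0, b m
          ≤ ∑ m ∈ (Finset.univ.filter (fun i : Fin n => (i : ℕ) < k)).erase i0, a m := by
        apply Finset.sum_le_sum
        intro m hm
        have hmk : (m : ℕ) < k := (Finset.mem_filter.mp (Finset.mem_erase.mp hm).2).2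
        exact hj0min m (Fin.lt_def.mpr (by omega))
      omega
    -- new partial sum domination
    have hble : ∀ k, psum b k ≤ psum a' k := by
      intro k
      rcases le_or_gt k (u : ℕ) with h | h
      · rw [hps1 k h]; exact hle k
      rcases le_or_gt k (v : ℕ) with h2 | h2
      · have := hps2 k h h2
        have hs := hstrict k (by omega) (by
          have : (v:ℕ) ≤ (j0:ℕ) := hvj
          omega)
        omega
      · rw [hps3 k h2]; exact hle k
    have htot' : psum a' n = psum b n := by
      rw [hps3 n v.isLt]; exact htot
    -- measure decreases
    have hmeas' : (∑ k ∈ Finset.range (n+1), (psum a' k - psum b k)) ≤ N := by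
      have hlt : (∑ k ∈ Finset.range (n+1), (psum a' k - psum b k))
          < ∑ k ∈ Finset.range (n+1), (psum a k - psum b k) := by
        apply Finset.sum_lt_sum
        · intro k _
          have hak : psum a' k ≤ psum a k := by
            rcases le_or_gt k (u : ℕ) with h | h
            · rw [hps1 k h]
            rcases le_or_gt k (v : ℕ) with h2 | h2
            · have := hps2 k h h2; omega
            · rw [hps3 k h2]
          omega
        · refine ⟨(v : ℕ), Finset.mem_range.mpr (by have := v.isLt; omega), ?_⟩
          have h2 := hps2 (v : ℕ) huv (le_refl _)
          have hs := hstrict (v : ℕ) (by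
            have h3 : (i0:ℕ) ≤ (u:ℕ) := hiu
            have h4 : (u:ℕ) < (v:ℕ) := huv
            omega) hvj
          omega
      omega
    -- realize a'
    obtain ⟨E, hE1, hE2⟩ := hwit
    have hdeg : rdeg E v < rdeg E u := by
      rw [hE2 u, hE2 v]; omega
    obtain ⟨E', hE'1, hE'u, hE'v, hE'w⟩ := transfer_realizable hE1 hdeg
    have hwit' : ∃ E : Finset (Finset (Fin n)), (∀ e ∈ E, e.card = r) ∧ ∀ w, rdeg E w = a' w := by
      refine ⟨E', hE'1, fun w => ?_⟩
      by_cases hwu : w = u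
      · rw [hwu, hE'u, hE2 u, ha'u]
      by_cases hwv : w = v
      · rw [hwv, hE'v, hE2 v, ha'v]
      · rw [hE'w w hwu hwv, hE2 w, ha'w w hwu hwv]
    exact IH a' b ha' hb hble htot' hmeas' hwit'

lemma setle_gt {n : ℕ} {X Y : Finset (Fin n)} (h : SetLE X Y) (w : Fin n) :
    (X.filter (fun x => w < x)).card ≤ (Y.filter (fun y => w < y)).card := by
  by_cases hw : (w : ℕ) + 1 < n
  · have h2 := h ⟨(w : ℕ) + 1, hw⟩
    have e1 : X.filter (fun x => (⟨(w : ℕ) + 1, hw⟩ : Fin n) ≤ x)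
        = X.filter (fun x => w < x) := by
      apply Finset.filter_congr; intro x _
      rw [Fin.le_def, Fin.lt_def]; simp only []; constructor <;> (intro; omega)
    have e2 : Y.filter (fun y => (⟨(w : ℕ) + 1, hw⟩ : Fin n) ≤ y)
        = Y.filter (fun y => w < y) := by
      apply Finset.filter_congr; intro x _
      rw [Fin.le_def, Fin.lt_def]; simp only []; constructor <;> (intro; omega)
    rw [e1, e2] at h2
    exact h2
  · have e1 : X.filter (fun x => w < x) = ∅ := by
      apply Finset.filter_eq_empty_iff.mpr
      intro x _
      rw [Fin.lt_def]
      have := x.isLt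
      omega
    rw [e1]
    simp

/-- single swap-down step preserving domination -/
lemma setle_step {n : ℕ} {X Y : Finset (Fin n)} (hcard : X.card = Y.card)
    (hle : SetLE X Y) (hne : X ≠ Y) :
    ∃ i j : Fin n, i < j ∧ j ∈ Y ∧ i ∉ Y ∧ SetLE X (insert i (Y.erase j)) := by
  classical
  -- pick j ∈ Y \ X
  have hYX : (Y \ X).Nonempty := by
    rw [Finset.sdiff_nonempty]
    intro hsub
    exact hne (Finset.eq_of_subset_of_card_le hsub hcard.le).symm
  obtain ⟨j, hj⟩ := hYX
  have hjY : j ∈ Y := (Finset.mem_sdiff.mp hj).1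
  have hjX : j ∉ X := (Finset.mem_sdiff.mp hj).2
  -- split cardinalities at j
  have hsplitX : X.card = (X.filter (fun x => x < j)).card + (X.filter (fun x => j < x)).card := by
    have h1 := Finset.card_filter_add_card_filter_not (s := X) (p := fun x => x < j)
    have h2 : X.filter (fun x => ¬ x < j) = X.filter (fun x => j < x) := by
      apply Finset.filter_congr
      intro x hx
      have hxj : x ≠ j := fun h => hjX (h ▸ hx)
      rw [Fin.lt_def, Fin.lt_def]
      have : (x:ℕ) ≠ (j:ℕ) := fun h => hxj (Fin.ext h)
      constructor <;> (intro; omega)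
    rw [h2] at h1
    omega
  have hsplitY : Y.card = (Y.filter (fun x => x < j)).card + (Y.filter (fun x => j < x)).card + 1 := by
    have h1 := Finset.card_filter_add_card_filter_not (s := Y) (p := fun x => x < j)
    have h2 : Y.filter (fun x => ¬ x < j) = insert j (Y.filter (fun x => j < x)) := by
      ext x
      simp only [Finset.mem_filter, Finset.mem_insert]
      constructor
      · rintro ⟨hxY, hnlt⟩
        rcases eq_or_lt_of_le (not_lt.mp hnlt) with h | h
        · exact Or.inl h.symm
        · exact Or.inr ⟨hxY, h⟩
      · rintro (rfl | ⟨hxY, hlt⟩)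
        · exact ⟨hjY, lt_irrefl _⟩
        · exact ⟨hxY, not_lt.mpr (le_of_lt hlt)⟩
    rw [h2, Finset.card_insert_of_notMem (by simp)] at h1
    omega
  have hhij := setle_gt hle j
  -- find i < j with i ∉ Y
  have hBne : (Finset.univ.filter (fun i : Fin n => i < j ∧ i ∉ Y)).Nonempty := by
    by_contra hcon
    rw [Finset.not_nonempty_iff_eq_empty, Finset.filter_eq_empty_iff] at hcon
    have hallY : ∀ w : Fin n, w < j → w ∈ Y := by
      intro w hw
      by_contra hwY
      exact (hcon (Finset.mem_univ w)) ⟨hw, hwY⟩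
    have hYlo : Y.filter (fun x => x < j) = Finset.univ.filter (fun x => x < j) := by
      apply Finset.Subset.antisymm
      · intro x hx; exact Finset.mem_filter.mpr ⟨Finset.mem_univ x, (Finset.mem_filter.mp hx).2⟩
      · intro x hx
        have := (Finset.mem_filter.mp hx).2
        exact Finset.mem_filter.mpr ⟨hallY x this, this⟩
    have hXlo : (X.filter (fun x => x < j)).card ≤ (Finset.univ.filter (fun x : Fin n => x < j)).card :=
      Finset.card_le_card (fun x hx => Finset.mem_filter.mpr ⟨Finset.mem_univ x, (Finset.mem_filter.mp hx).2⟩)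
    rw [hYlo] at hsplitY
    omega
  set i := (Finset.univ.filter (fun i : Fin n => i < j ∧ i ∉ Y)).max' hBne with hidef
  have himem := Finset.max'_mem _ hBne
  have hij : i < j := (Finset.mem_filter.mp himem).2.1
  have hiY : i ∉ Y := (Finset.mem_filter.mp himem).2.2
  have hmaxi : ∀ w : Fin n, i < w → w < j → w ∈ Y := by
    intro w hiw hwj
    by_contra hwY
    have : w ≤ i := Finset.le_max' _ w (Finset.mem_filter.mpr ⟨Finset.mem_univ w, hwj, hwY⟩)
    exact absurd hiw (not_lt.mpr this)
  refine ⟨i, j, hij, hjY, hiY, ?_⟩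
  -- prove SetLE X (insert i (Y.erase j))
  intro t
  have hfilter : (insert i (Y.erase j)).filter (fun y => t ≤ y)
      = if t ≤ i then insert i ((Y.filter (fun y => t ≤ y)).erase j)
        else (Y.filter (fun y => t ≤ y)).erase j := by
    rw [Finset.filter_insert, Finset.filter_erase]
  by_cases hti : t ≤ i
  · rw [hfilter, if_pos hti]
    have hjmem : j ∈ Y.filter (fun y => t ≤ y) :=
      Finset.mem_filter.mpr ⟨hjY, le_of_lt (lt_of_le_of_lt hti hij)⟩
    have hinotin : i ∉ (Y.filter (fun y => t ≤ y)).erase j :=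
      fun h => hiY (Finset.mem_filter.mp (Finset.mem_of_mem_erase h)).1
    rw [Finset.card_insert_of_notMem hinotin, Finset.card_erase_of_mem hjmem]
    have h1 := hle t
    have h2 : 1 ≤ (Y.filter (fun y => t ≤ y)).card := Finset.card_pos.mpr ⟨j, hjmem⟩
    omega
  · rw [hfilter, if_neg hti]
    push_neg at hti
    by_cases htj : t ≤ j
    · -- the strict case
      rw [Finset.card_erase_of_mem (Finset.mem_filter.mpr ⟨hjY, htj⟩)]
      -- show X.filter (t ≤ ·) < Y.filter (t ≤ ·)
      have hA : Finset.univ.filter (fun w : Fin n => t ≤ w ∧ w < j) ⊆ Y.filter (fun y => t ≤ y) := by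
        intro w hw
        have hw' := Finset.mem_filter.mp hw
        exact Finset.mem_filter.mpr ⟨hmaxi w (lt_of_lt_of_le hti hw'.2.1) hw'.2.2, hw'.2.1⟩
      set A := Finset.univ.filter (fun w : Fin n => t ≤ w ∧ w < j) with hAdef
      have hYsub : A ∪ insert j (Y.filter (fun y => j < y)) ⊆ Y.filter (fun y => t ≤ y) := by
        intro x hx
        rcases Finset.mem_union.mp hx with hx | hx
        · exact hA hx
        · rcases Finset.mem_insert.mp hx with rfl | hx
          · exact Finset.mem_filter.mpr ⟨hjY, htj⟩
          · have := Finset.mem_filter.mp hx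
            exact Finset.mem_filter.mpr ⟨this.1, le_of_lt (lt_of_le_of_lt htj this.2)⟩
      have hdisj1 : Disjoint A (insert j (Y.filter (fun y => j < y))) := by
        rw [Finset.disjoint_left]
        intro x hxA hxI
        have hxj := (Finset.mem_filter.mp hxA).2.2
        rcases Finset.mem_insert.mp hxI with rfl | hx
        · exact absurd hxj (lt_irrefl x)
        · exact absurd (lt_trans hxj (Finset.mem_filter.mp hx).2) (lt_irrefl x)
      have hYcard : A.card + ((Y.filter (fun y => j < y)).card + 1) ≤ (Y.filter (fun y => t ≤ y)).card := by
        have := Finset.card_le_card hYsub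
        rw [Finset.card_union_of_disjoint hdisj1,
          Finset.card_insert_of_notMem (by simp)] at this
        omega
      have hXsub : X.filter (fun x => t ≤ x) ⊆ A ∪ X.filter (fun x => j < x) := by
        intro x hx
        obtain ⟨hxX, htx⟩ := Finset.mem_filter.mp hx
        rcases lt_trichotomy x j with h | h | h
        · exact Finset.mem_union_left _ (Finset.mem_filter.mpr ⟨Finset.mem_univ x, htx, h⟩)
        · exact absurd (h ▸ hxX) hjX
        · exact Finset.mem_union_right _ (Finset.mem_filter.mpr ⟨hxX, h⟩)
      have hXcard : (X.filter (fun x => t ≤ x)).card ≤ A.card + (X.filter (fun x => j < x)).card :=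
        le_trans (Finset.card_le_card hXsub) (Finset.card_union_le _ _)
      have hbridgeY : (Finset.filter (LE.le t) Y).card = (Y.filter (fun y => t ≤ y)).card := rfl
      have hbridgeX : (Finset.filter (LE.le t) X).card = (X.filter (fun x => t ≤ x)).card := rfl
      omega
    · -- t > j : erasing j is free
      push_neg at htj
      rw [Finset.erase_eq_of_notMem (fun h => absurd (Finset.mem_filter.mp h).2 (not_le.mpr htj))]
      exact hle t

lemma stable_ideal {n r : ℕ} {E : Finset (Finset (Fin n))}
    (hU : ∀ e ∈ E, e.card = r)
    (hstab : ∀ i j : Fin n, i < j → ∀ e ∈ E, j ∈ e → i ∉ e → insert i (e.erase j) ∈ E) :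
    IsRIdeal n r E := by
  classical
  refine ⟨hU, ?_⟩
  have key : ∀ M : ℕ, ∀ Y : Finset (Fin n), (∑ v ∈ Y, (v : ℕ)) ≤ M → Y ∈ E →
      ∀ X : Finset (Fin n), X.card = Y.card → SetLE X Y → X ∈ E := by
    intro M
    induction M using Nat.strong_induction_on with
    | _ M IH =>
    intro Y hYsum hYE X hXcard hXY
    by_cases hXYeq : X = Y
    · exact hXYeq ▸ hYE
    obtain ⟨i, j, hij, hjY, hiY, hZle⟩ := setle_step hXcard hXY hXYeq
    set Z := insert i (Y.erase j) with hZdef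
    have hZE : Z ∈ E := hstab i j hij Y hYE hjY hiY
    have hZcard : Z.card = Y.card := by
      rw [hZdef, Finset.card_insert_of_notMem (fun h => hiY (Finset.mem_of_mem_erase h)),
        Finset.card_erase_of_mem hjY]
      have : 1 ≤ Y.card := Finset.card_pos.mpr ⟨j, hjY⟩
      omega
    have hjsum : (j : ℕ) ≤ ∑ v ∈ Y, (v : ℕ) :=
      Finset.single_le_sum (fun v _ => Nat.zero_le _) hjY
    have hZsum : (∑ v ∈ Z, (v : ℕ)) < ∑ v ∈ Y, (v : ℕ) := by
      rw [hZdef, Finset.sum_insert (fun h => hiY (Finset.mem_of_mem_erase h))]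
      have herase : (∑ v ∈ Y.erase j, (v : ℕ)) + (j : ℕ) = ∑ v ∈ Y, (v : ℕ) :=
        Finset.sum_erase_add Y _ hjY
      have : (i : ℕ) < (j : ℕ) := hij
      omega
    exact IH (∑ v ∈ Z, (v : ℕ)) (by omega) Z (le_refl _) hZE X (hXcard.trans hZcard.symm) hZle
  intro X Y hYE hXcard hXY
  exact key (∑ v ∈ Y, (v : ℕ)) Y (le_refl _) hYE X
    (by rw [hXcard, hU Y hYE]) hXY

lemma filter_image_mem {n : ℕ} (M : Finset (Finset (Fin n)))
    (φ : Finset (Fin n) → Finset (Fin n)) (w : Fin n) :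
    (M.image φ).filter (fun e => w ∈ e) = (M.filter (fun e => w ∈ φ e)).image φ := by
  ext f
  simp only [Finset.mem_filter, Finset.mem_image]
  constructor
  · rintro ⟨⟨e, he, rfl⟩, hw⟩; exact ⟨e, ⟨he, hw⟩, rfl⟩
  · rintro ⟨e, ⟨he, hw⟩, rfl⟩; exact ⟨⟨e, he, rfl⟩, hw⟩

lemma topSum_transfer {n : ℕ} {a a' : Fin n → ℕ} {i j : Fin n} {t : ℕ}
    (hne : i ≠ j) (hai : a' i = a i + t) (haj : a' j + t = a j)
    (hother : ∀ w, w ≠ i → w ≠ j → a' w = a w)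
    (hkey : a j ≤ a i + t) : ∀ k, topSum a k ≤ topSum a' k := by
  intro k
  apply topSum_le
  intro S hS
  by_cases hjS : j ∈ S
  · by_cases hiS : i ∈ S
    · -- sum over S unchanged
      have hiS' : i ∈ S.erase j := Finset.mem_erase.mpr ⟨hne, hiS⟩
      have h1 : ∑ x ∈ (S.erase j).erase i, a x + a i = ∑ x ∈ S.erase j, a x :=
        Finset.sum_erase_add _ _ hiS'
      have h2 : ∑ x ∈ S.erase j, a x + a j = ∑ x ∈ S, a x :=
        Finset.sum_erase_add _ _ hjS
      have h1' : ∑ x ∈ (S.erase j).erase i, a' x + a' i = ∑ x ∈ S.erase j, a' x :=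
        Finset.sum_erase_add _ _ hiS'
      have h2' : ∑ x ∈ S.erase j, a' x + a' j = ∑ x ∈ S, a' x :=
        Finset.sum_erase_add _ _ hjS
      have hcong : ∑ x ∈ (S.erase j).erase i, a' x = ∑ x ∈ (S.erase j).erase i, a x := by
        apply Finset.sum_congr rfl
        intro x hx
        exact hother x (Finset.mem_erase.mp hx).1 (Finset.mem_erase.mp (Finset.mem_erase.mp hx).2).1
      have : ∑ x ∈ S, a x ≤ ∑ x ∈ S, a' x := by omega
      exact le_trans this (le_topSum a' hS)
    · -- move j to i
      set S' := insert i (S.erase j) with hS'def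
      have hcard : S'.card ≤ k := by
        rw [hS'def, Finset.card_insert_of_notMem (fun h => hiS (Finset.mem_of_mem_erase h)),
          Finset.card_erase_of_mem hjS]
        have : 1 ≤ S.card := Finset.card_pos.mpr ⟨j, hjS⟩
        omega
      have h2 : ∑ x ∈ S.erase j, a x + a j = ∑ x ∈ S, a x :=
        Finset.sum_erase_add _ _ hjS
      have h3 : ∑ x ∈ S', a' x = a' i + ∑ x ∈ S.erase j, a' x := by
        rw [hS'def, Finset.sum_insert (fun h => hiS (Finset.mem_of_mem_erase h))]
      have hcong : ∑ x ∈ S.erase j, a' x = ∑ x ∈ S.erase j, a x := by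
        apply Finset.sum_congr rfl
        intro x hx
        exact hother x (fun h => hiS (h ▸ Finset.mem_of_mem_erase hx)) (Finset.mem_erase.mp hx).1
      have : ∑ x ∈ S, a x ≤ ∑ x ∈ S', a' x := by omega
      exact le_trans this (le_topSum a' hcard)
  · -- j ∉ S : pointwise
    have : ∑ x ∈ S, a x ≤ ∑ x ∈ S, a' x := by
      apply Finset.sum_le_sum
      intro x hx
      by_cases hxi : x = i
      · rw [hxi, hai]; omega
      · rw [hother x hxi (fun h => hjS (h ▸ hx))]
    exact le_trans this (le_topSum a' hS)

lemma compress_step {n r : ℕ} {E : Finset (Finset (Fin n))}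
    (hU : ∀ e ∈ E, e.card = r) {i j : Fin n} (hij : i < j)
    (hMne : (E.filter (fun e => j ∈ e ∧ i ∉ e ∧ insert i (e.erase j) ∉ E)).Nonempty) :
    ∃ E' : Finset (Finset (Fin n)), (∀ e ∈ E', e.card = r) ∧
      (∀ k, topSum (rdeg E) k ≤ topSum (rdeg E') k) ∧
      (∑ v, rdeg E' v = ∑ v, rdeg E v) ∧
      (∑ e ∈ E', ∑ v ∈ e, (v : ℕ)) < ∑ e ∈ E, ∑ v ∈ e, (v : ℕ) := by
  classical
  have hijne : i ≠ j := ne_of_lt hij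
  set φ : Finset (Fin n) → Finset (Fin n) := fun e => insert i (e.erase j) with hφdef
  set M := E.filter (fun e => j ∈ e ∧ i ∉ e ∧ φ e ∉ E) with hMdef
  have hMsub : M ⊆ E := Finset.filter_subset _ _
  have hMspec : ∀ e ∈ M, j ∈ e ∧ i ∉ e ∧ φ e ∉ E := fun e he => (Finset.mem_filter.mp he).2
  have hinj : Set.InjOn φ (↑M : Set (Finset (Fin n))) := by
    intro e1 he1 e2 he2 heq
    rw [Finset.mem_coe] at he1 he2
    obtain ⟨hj1, hi1, -⟩ := hMspec e1 he1
    obtain ⟨hj2, hi2, -⟩ := hMspec e2 he2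
    have hi1' : i ∉ e1.erase j := fun h => hi1 (Finset.mem_of_mem_erase h)
    have hi2' : i ∉ e2.erase j := fun h => hi2 (Finset.mem_of_mem_erase h)
    have herase : e1.erase j = e2.erase j := by
      have := congrArg (fun s => Finset.erase s i) heq
      simpa [hφdef, Finset.erase_insert hi1', Finset.erase_insert hi2'] using this
    calc e1 = insert j (e1.erase j) := (Finset.insert_erase hj1).symm
      _ = insert j (e2.erase j) := by rw [herase]
      _ = e2 := Finset.insert_erase hj2
  have hφmem : ∀ e ∈ M, i ∈ φ e ∧ j ∉ φ e := by
    intro e he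
    refine ⟨Finset.mem_insert_self _ _, ?_⟩
    simp only [hφdef, Finset.mem_insert]
    push_neg
    exact ⟨fun h => hijne h.symm, Finset.notMem_erase j e⟩
  have hφcard : ∀ e ∈ M, (φ e).card = e.card := by
    intro e he
    obtain ⟨hje, hie, -⟩ := hMspec e he
    rw [hφdef]
    simp only []
    rw [Finset.card_insert_of_notMem (fun h => hie (Finset.mem_of_mem_erase h)),
      Finset.card_erase_of_mem hje]
    have : 1 ≤ e.card := Finset.card_pos.mpr ⟨j, hje⟩
    omega
  have himgE : ∀ f ∈ M.image φ, f ∉ E := by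
    intro f hf
    obtain ⟨e, he, rfl⟩ := Finset.mem_image.mp hf
    exact (hMspec e he).2.2
  have hdisj : Disjoint (E \ M) (M.image φ) := by
    rw [Finset.disjoint_right]
    intro f hf
    intro hfE
    exact himgE f hf (Finset.mem_sdiff.mp hfE).1
  set E' := (E \ M) ∪ M.image φ with hE'def
  have hEsplit : (E \ M) ∪ M = E := Finset.sdiff_union_of_subset hMsub
  have hdisj2 : Disjoint (E \ M) M := Finset.sdiff_disjoint
  -- degrees
  have hdegE : ∀ w, rdeg E w = rdeg (E \ M) w + rdeg M w := by
    intro w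
    unfold rdeg
    conv_lhs => rw [← hEsplit]
    rw [Finset.filter_union]
    exact Finset.card_union_of_disjoint (Finset.disjoint_filter_filter (p := fun e => w ∈ e) (q := fun e => w ∈ e) hdisj2)
  have hdegE' : ∀ w, rdeg E' w = rdeg (E \ M) w + rdeg (M.image φ) w := by
    intro w
    unfold rdeg
    rw [hE'def, Finset.filter_union]
    exact Finset.card_union_of_disjoint (Finset.disjoint_filter_filter (p := fun e => w ∈ e) (q := fun e => w ∈ e) hdisj)
  have himgdeg : ∀ w, w ≠ i → w ≠ j → rdeg (M.image φ) w = rdeg M w := by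
    intro w hwi hwj
    unfold rdeg
    rw [filter_image_mem]
    have hpred : M.filter (fun e => w ∈ φ e) = M.filter (fun e => w ∈ e) := by
      apply Finset.filter_congr
      intro e he
      simp only [hφdef, Finset.mem_insert, Finset.mem_erase]
      constructor
      · rintro (rfl | ⟨-, h⟩)
        · exact absurd rfl hwi
        · exact h
      · intro h; exact Or.inr ⟨hwj, h⟩
    rw [hpred]
    exact Finset.card_image_of_injOn (hinj.mono (by
      intro e he
      exact Finset.mem_coe.mpr (Finset.filter_subset _ _ (Finset.mem_coe.mp he))))
  have himgi : rdeg (M.image φ) i = M.card := by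
    unfold rdeg
    rw [filter_image_mem]
    have : M.filter (fun e => i ∈ φ e) = M := by
      apply Finset.filter_true_of_mem
      intro e he
      exact (hφmem e he).1
    rw [this]
    exact Finset.card_image_of_injOn hinj
  have himgj : rdeg (M.image φ) j = 0 := by
    unfold rdeg
    rw [filter_image_mem]
    have : M.filter (fun e => j ∈ φ e) = ∅ := by
      apply Finset.filter_eq_empty_iff.mpr
      intro e he
      exact (hφmem e he).2
    rw [this]
    simp
  have hMi : rdeg M i = 0 := by
    unfold rdeg
    have : M.filter (fun e => i ∈ e) = ∅ := by
      apply Finset.filter_eq_empty_iff.mpr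
      intro e he
      exact (hMspec e he).2.1
    rw [this]; simp
  have hMj : rdeg M j = M.card := by
    unfold rdeg
    rw [Finset.filter_true_of_mem (fun e he => (hMspec e he).1)]
  -- key inequality : rdeg E j ≤ rdeg E i + M.card
  have hkey : rdeg E j ≤ rdeg E i + M.card := by
    have hsplitj := rdeg_split E j i
    have hspliti := rdeg_split E i j
    -- split the (j ∈ e ∧ i ∉ e) part by whether φ e ∈ E
    set U := (E.filter (fun e => j ∈ e ∧ i ∉ e)).filter (fun e => φ e ∈ E) with hUdef
    have hsplit2 : U.card + M.card = (E.filter (fun e => j ∈ e ∧ i ∉ e)).card := by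
      have hMeq : (E.filter (fun e => j ∈ e ∧ i ∉ e)).filter (fun e => ¬ φ e ∈ E) = M := by
        rw [Finset.filter_filter]
        apply Finset.filter_congr
        intro e _
        tauto
      rw [hUdef, ← hMeq]
      exact Finset.card_filter_add_card_filter_not _
    have hUimg : U.image φ ⊆ E.filter (fun e => i ∈ e ∧ j ∉ e) := by
      intro f hf
      obtain ⟨e, he, rfl⟩ := Finset.mem_image.mp hf
      have heE : e ∈ E := Finset.mem_of_mem_filter _ (Finset.filter_subset _ _ he)
      have hφE : φ e ∈ E := (Finset.mem_filter.mp he).2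
      refine Finset.mem_filter.mpr ⟨hφE, Finset.mem_insert_self _ _, ?_⟩
      simp only [hφdef, Finset.mem_insert]
      push_neg
      exact ⟨fun h => hijne h.symm, Finset.notMem_erase j e⟩
    have hUinj : Set.InjOn φ (↑U : Set (Finset (Fin n))) := by
      intro e1 he1 e2 he2 heq
      rw [Finset.mem_coe] at he1 he2
      have h1 := (Finset.mem_filter.mp (Finset.mem_filter.mp he1).1).2
      have h2 := (Finset.mem_filter.mp (Finset.mem_filter.mp he2).1).2
      have hi1' : i ∉ e1.erase j := fun h => h1.2 (Finset.mem_of_mem_erase h)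
      have hi2' : i ∉ e2.erase j := fun h => h2.2 (Finset.mem_of_mem_erase h)
      have herase : e1.erase j = e2.erase j := by
        have := congrArg (fun s => Finset.erase s i) heq
        simpa [hφdef, Finset.erase_insert hi1', Finset.erase_insert hi2'] using this
      calc e1 = insert j (e1.erase j) := (Finset.insert_erase h1.1).symm
        _ = insert j (e2.erase j) := by rw [herase]
        _ = e2 := Finset.insert_erase h2.1
    have hUcard : U.card ≤ (E.filter (fun e => i ∈ e ∧ j ∉ e)).card := by
      calc U.card = (U.image φ).card := (Finset.card_image_of_injOn hUinj).symm
        _ ≤ _ := Finset.card_le_card hUimg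
    have hboth : (E.filter (fun e => j ∈ e ∧ i ∈ e)).card
        = (E.filter (fun e => i ∈ e ∧ j ∈ e)).card := by
      congr 1
      exact Finset.filter_congr (fun e _ => and_comm)
    omega
  -- uniformity of E'
  have hU' : ∀ e ∈ E', e.card = r := by
    intro e he
    rcases Finset.mem_union.mp he with he | he
    · exact hU e (Finset.mem_sdiff.mp he).1
    · obtain ⟨f, hf, rfl⟩ := Finset.mem_image.mp he
      rw [hφcard f hf]
      exact hU f (hMsub hf)
  -- topSum inequality
  have htop : ∀ k, topSum (rdeg E) k ≤ topSum (rdeg E') k := by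
    have hai : rdeg E' i = rdeg E i + M.card := by
      rw [hdegE' i, hdegE i, himgi, hMi]
      omega
    have haj : rdeg E' j + M.card = rdeg E j := by
      rw [hdegE' j, hdegE j, himgj, hMj]
      omega
    have hother : ∀ w, w ≠ i → w ≠ j → rdeg E' w = rdeg E w := by
      intro w hwi hwj
      rw [hdegE' w, hdegE w, himgdeg w hwi hwj]
    exact topSum_transfer (hne := hijne) hai haj hother (by omega)
  -- total degree preserved
  have hsum : ∑ v, rdeg E' v = ∑ v, rdeg E v := by
    have h1 : ∀ (F : Finset (Finset (Fin n))), ∑ v, rdeg F v = ∑ e ∈ F, e.card := by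
      intro F
      unfold rdeg
      simp_rw [Finset.card_filter]
      rw [Finset.sum_comm]
      apply Finset.sum_congr rfl
      intro e _
      rw [Finset.sum_ite_mem, Finset.univ_inter, Finset.card_eq_sum_ones]
    rw [h1, h1, hE'def, Finset.sum_union hdisj,
      Finset.sum_image (fun x hx y hy h => hinj hx hy h)]
    conv_rhs => rw [← hEsplit, Finset.sum_union hdisj2]
    have : ∑ e ∈ M, (φ e).card = ∑ e ∈ M, e.card :=
      Finset.sum_congr rfl (fun e he => hφcard e he)
    omega
  -- potential strictly decreases
  have hpot : (∑ e ∈ E', ∑ v ∈ e, (v : ℕ)) < ∑ e ∈ E, ∑ v ∈ e, (v : ℕ) := by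
    rw [hE'def, Finset.sum_union hdisj]
    conv_rhs => rw [← hEsplit, Finset.sum_union hdisj2]
    have himg : ∑ f ∈ M.image φ, ∑ v ∈ f, (v : ℕ)
        = ∑ e ∈ M, ∑ v ∈ φ e, (v : ℕ) :=
      Finset.sum_image (fun x hx y hy h => hinj hx hy h)
    have hlt : ∑ e ∈ M, ∑ v ∈ φ e, (v : ℕ) < ∑ e ∈ M, ∑ v ∈ e, (v : ℕ) := by
      apply Finset.sum_lt_sum_of_nonempty hMne
      intro e he
      obtain ⟨hje, hie, -⟩ := hMspec e he
      have h1 : ∑ v ∈ φ e, (v : ℕ) = (i : ℕ) + ∑ v ∈ e.erase j, (v : ℕ) := by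
        rw [hφdef]
        exact Finset.sum_insert (fun h => hie (Finset.mem_of_mem_erase h))
      have h2 : (∑ v ∈ e.erase j, (v : ℕ)) + (j : ℕ) = ∑ v ∈ e, (v : ℕ) :=
        Finset.sum_erase_add _ _ hje
      have : (i : ℕ) < (j : ℕ) := hij
      omega
    omega
  exact ⟨E', hU', htop, hsum, hpot⟩

lemma exists_ideal {n r : ℕ} : ∀ N : ℕ, ∀ E : Finset (Finset (Fin n)),
    (∀ e ∈ E, e.card = r) → (∑ e ∈ E, ∑ v ∈ e, (v : ℕ)) ≤ N →
    ∃ E' : Finset (Finset (Fin n)), IsRIdeal n r E' ∧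
      (∀ k, topSum (rdeg E) k ≤ topSum (rdeg E') k) ∧
      ∑ v, rdeg E' v = ∑ v, rdeg E v := by
  intro N
  induction N using Nat.strong_induction_on with
  | _ N IH =>
  intro E hU hpot
  classical
  by_cases hstab : ∀ i j : Fin n, i < j → ∀ e ∈ E, j ∈ e → i ∉ e → insert i (e.erase j) ∈ E
  · exact ⟨E, stable_ideal hU hstab, fun k => le_refl _, rfl⟩
  · push_neg at hstab
    obtain ⟨i, j, hij, e, heE, hje, hie, hnot⟩ := hstab
    have hMne : (E.filter (fun e => j ∈ e ∧ i ∉ e ∧ insert i (e.erase j) ∉ E)).Nonempty :=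
      ⟨e, Finset.mem_filter.mpr ⟨heE, hje, hie, hnot⟩⟩
    obtain ⟨E'', hU'', htop'', hsum'', hpot''⟩ := compress_step hU hij hMne
    have hlt : (∑ e ∈ E'', ∑ v ∈ e, (v : ℕ)) < N := lt_of_lt_of_le hpot'' hpot
    obtain ⟨E', hIdeal, htop', hsum'⟩ := IH _ hlt E'' hU'' (le_refl _)
    exact ⟨E', hIdeal, fun k => le_trans (htop'' k) (htop' k), hsum'.trans hsum''⟩

end Aux

/-- a weakly decreasing nonnegative integer sequence is the degree
partition of an `r`-uniform hypergraph on `[n]` iff it is majorized by the degree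
sequence of an `r`-ideal. -/
theorem rgraphical_iff_majorized_by_ideal (n r : ℕ) (d : Fin n → ℕ)
    (hd : Antitone d) :
    IsRDegSeq n r d ↔
      ∃ E : Finset (Finset (Fin n)), IsRIdeal n r E ∧ Majorizes (rdeg E) d := by
  constructor
  · rintro ⟨E, hU, hdv⟩
    have hdE : d = rdeg E := funext hdv
    obtain ⟨E', hIdeal, htop, hsum⟩ :=
      exists_ideal (∑ e ∈ E, ∑ v ∈ e, (v : ℕ)) E hU (le_refl _)
    refine ⟨E', hIdeal, ?_⟩
    apply majorizes_of_topSum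
    · intro k
      rw [hdE]
      exact htop k
    · rw [hdE]
      exact hsum
  · rintro ⟨E, ⟨hU, -⟩, σ, τ, hσ, hτ, hps, htot⟩
    have hwit : ∃ F : Finset (Finset (Fin n)), (∀ e ∈ F, e.card = r) ∧
        ∀ w, rdeg F w = (rdeg E ∘ σ) w := by
      refine ⟨E.image (fun e => e.image ⇑σ⁻¹), relabel_uniform hU σ⁻¹, fun w => ?_⟩
      rw [rdeg_relabel E σ⁻¹ w]
      simp
    have hle : ∀ k, psum (d ∘ τ) k ≤ psum (rdeg E ∘ σ) k := by
      intro k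
      rcases le_or_gt k n with h | h
      · exact hps k h
      · rw [psum_of_le _ h.le, psum_of_le _ h.le]
        rw [psum_n, psum_n] at htot
        omega
    obtain ⟨F, hF1, hF2⟩ := chain_realize (n := n) (r := r)
      (∑ k ∈ Finset.range (n + 1), (psum (rdeg E ∘ σ) k - psum (d ∘ τ) k))
      (rdeg E ∘ σ) (d ∘ τ) hσ hτ hle htot (le_refl _) hwit
    refine ⟨F.image (fun e => e.image ⇑τ), relabel_uniform hF1 τ, fun v => ?_⟩
    rw [rdeg_relabel F τ v, hF2 (τ⁻¹ v)]
    simp
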